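/- Let $S \subseteq \mathbb{R}^n$ be measurable with $S + 2\pi\mathbb{Z}^n = \mathbb{R}^n$ (covering property) and $S$ bounded. Then for every sequence $(c_k)_{k \in \mathbb{Z}^n} \in \ell^2(\mathbb{Z}^n)$, there exists $F \in L^2(S)$ whose Fourier coefficients against $\{(2\pi)^{-n/2}e^{ik\cdot x}\}$, i.e., $(2\pi)^{-n/2}\int_S F(x)e^{-ik\cdot x}\,dx$, equal $c_k$ for all $k$. -/

import Mathlib

open MeasureTheory Real Finset



lemma oneDim (m : ℤ) : ∫ x in Set.Ico (0:ℝ) (2*π),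
    Complex.exp (Complex.I * m * x) = if m = 0 then ((2*π:ℝ):ℂ) else 0 := by
  rcases eq_or_ne m 0 with h | h
  · subst h
    simp [Real.volume_Ico, ENNReal.toReal_ofReal Real.two_pi_pos.le, Complex.ofReal_mul,
      max_eq_left Real.two_pi_pos.le]
  · rw [if_neg h]
    have h2 : (Complex.I * m) ≠ 0 := by
      simp [Complex.I_ne_zero, Complex.ext_iff, h]
    rw [integral_Ico_eq_integral_Ioo, ← integral_Ioc_eq_integral_Ioo,
      ← intervalIntegral.integral_of_le Real.two_pi_pos.le]
    have : ∀ x : ℝ, Complex.I * m * x = (Complex.I * m) * x := fun x => by ring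
    rw [integral_exp_mul_complex h2]
    have h3 : Complex.I * m * (2*π:ℝ) = m * (2 * π * Complex.I) := by push_cast; ring
    rw [h3, Complex.exp_int_mul_two_pi_mul_I]
    simp

noncomputable def eC {n : ℕ} (m : Fin n → ℤ) (x : Fin n → ℝ) : ℂ :=
  Complex.exp (Complex.I * ((∑ j, (m j : ℝ) * x j : ℝ) : ℂ))

lemma indicator_pi_prod {n : ℕ} (t : Fin n → Set ℝ) (f : Fin n → ℝ → ℂ) (x : Fin n → ℝ) :
    (Set.pi Set.univ t).indicator (fun x => ∏ j, f j (x j)) x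
      = ∏ j, (t j).indicator (f j) (x j) := by
  by_cases h : x ∈ Set.pi Set.univ t
  · rw [Set.indicator_of_mem h]
    exact Finset.prod_congr rfl fun j _ => (Set.indicator_of_mem (h j (Set.mem_univ j)) _).symm
  · rw [Set.indicator_of_notMem h]
    rw [Set.mem_univ_pi] at h
    push_neg at h
    obtain ⟨j, hj⟩ := h
    exact (Finset.prod_eq_zero (mem_univ j) (Set.indicator_of_notMem hj _)).symm

lemma boxInt {n : ℕ} (m : Fin n → ℤ) :
    ∫ x in Set.pi Set.univ (fun _ : Fin n => Set.Ico (0:ℝ) (2*π)), eC m x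
      = if m = 0 then (((2*π)^n : ℝ) : ℂ) else 0 := by
  have he : ∀ x : Fin n → ℝ, eC m x = ∏ j, Complex.exp (Complex.I * (m j) * (x j)) := by
    intro x
    rw [eC, ← Complex.exp_sum]
    congr 1
    push_cast
    rw [Finset.mul_sum]
    exact Finset.sum_congr rfl fun j _ => by ring
  simp_rw [he]
  rw [← integral_indicator (MeasurableSet.univ_pi fun _ => measurableSet_Ico)]
  simp_rw [indicator_pi_prod (fun _ => Set.Ico (0:ℝ) (2*π))
    (fun j t => Complex.exp (Complex.I * (m j) * t))]
  rw [volume_pi, MeasureTheory.integral_fintype_prod_eq_prod (ι := Fin n)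
    (fun j => (Set.Ico (0:ℝ) (2*π)).indicator (fun t => Complex.exp (Complex.I * (m j) * t)))]
  have h1 : ∀ j, (∫ t : ℝ, (Set.Ico (0:ℝ) (2*π)).indicator
      (fun t => Complex.exp (Complex.I * (m j) * t)) t)
      = if m j = 0 then ((2*π:ℝ):ℂ) else 0 := by
    intro j
    rw [integral_indicator measurableSet_Ico]
    exact oneDim (m j)
  simp_rw [h1]
  rcases eq_or_ne m 0 with h | h
  · subst h
    simp [Finset.prod_const]
  · rw [if_neg h]
    obtain ⟨j, hj⟩ : ∃ j, m j ≠ 0 := by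
      by_contra hc; push_neg at hc; exact h (funext hc)
    exact Finset.prod_eq_zero (mem_univ j) (if_neg hj)



lemma eC_norm {n : ℕ} (m : Fin n → ℤ) (x : Fin n → ℝ) : ‖eC m x‖ = 1 := by
  rw [eC, Complex.norm_exp]
  simp

lemma eC_continuous {n : ℕ} (m : Fin n → ℤ) : Continuous (eC m) := by
  apply Complex.continuous_exp.comp
  apply Continuous.mul continuous_const
  apply Complex.continuous_ofReal.comp
  exact continuous_finset_sum _ fun j _ => continuous_const.mul (continuous_apply j)

lemma eC_periodic {n : ℕ} (m k : Fin n → ℤ) (x : Fin n → ℝ) :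
    eC m (x + fun i => 2 * π * (k i : ℝ)) = eC m x := by
  have h1 : (∑ j, (m j : ℝ) * (x + fun i => 2 * π * (k i : ℝ)) j)
      = (∑ j, (m j : ℝ) * x j) + 2 * π * ∑ j, (m j : ℝ) * (k j : ℝ) := by
    simp only [Pi.add_apply, mul_add]
    rw [Finset.sum_add_distrib]
    congr 1
    rw [Finset.mul_sum]
    exact Finset.sum_congr rfl fun j _ => by ring
  rw [eC, eC, h1]
  push_cast
  rw [mul_add, Complex.exp_add]
  have h2 : Complex.I * (2 * π * ∑ j, (m j : ℂ) * (k j : ℂ))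
      = ((∑ j, m j * k j : ℤ) : ℂ) * (2 * π * Complex.I) := by push_cast; ring
  rw [h2, Complex.exp_int_mul_two_pi_mul_I, mul_one]

lemma integrableOn_eC {n : ℕ} (m : Fin n → ℤ) {T : Set (Fin n → ℝ)}
    (hT : volume T ≠ ⊤) : IntegrableOn (eC m) T := by
  apply Measure.integrableOn_of_bounded hT (eC_continuous m).aestronglyMeasurable
  exact Filter.Eventually.of_forall fun x => (eC_norm m x).le

lemma exists_fund (n : ℕ) (S : Set (Fin n → ℝ)) (hSm : MeasurableSet S)
    (hSvol : volume S ≠ ⊤)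
    (hcov : ∀ y : Fin n → ℝ, ∃ s ∈ S, ∃ m : Fin n → ℤ,
      y = s + (2 * π) • (fun i => (m i : ℝ))) :
    ∃ D : Set (Fin n → ℝ), MeasurableSet D ∧ D ⊆ S ∧
      ∀ m : Fin n → ℤ, ∫ x in D, eC m x = if m = 0 then (((2*π)^n : ℝ) : ℂ) else 0 := by
  classical
  set c2 : (Fin n → ℤ) → (Fin n → ℝ) := fun k i => 2 * π * (k i : ℝ) with hc2
  set Q : Set (Fin n → ℝ) := Set.pi Set.univ fun _ : Fin n => Set.Ico (0:ℝ) (2*π) with hQ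
  have hQmeas : MeasurableSet Q := MeasurableSet.univ_pi fun _ => measurableSet_Ico
  have hQvol : volume Q ≠ ⊤ := by
    rw [hQ, volume_pi_pi]
    exact (ENNReal.prod_lt_top fun _ _ => by rw [Real.volume_Ico]; exact ENNReal.ofReal_lt_top).ne
  -- existence of a translate landing in S
  have hex : ∀ x : Fin n → ℝ, ∃ j : ℕ, ∃ m : Fin n → ℤ,
      Encodable.encode m = j ∧ x + c2 m ∈ S := by
    intro x
    obtain ⟨s, hs, m, hm⟩ := hcov x
    refine ⟨Encodable.encode (-m), -m, rfl, ?_⟩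
    have hxm : x + c2 (-m) = s := by
      subst hm
      funext i
      simp only [hc2, Pi.add_apply, Pi.smul_apply, smul_eq_mul, Pi.neg_apply]
      push_cast
      ring
    rwa [hxm]
  -- the partition of Q
  set A : (Fin n → ℤ) → Set (Fin n → ℝ) := fun m =>
    (Q ∩ ((· + c2 m) ⁻¹' S)) ∩
      (⋂ m' ∈ {m' : Fin n → ℤ | Encodable.encode m' < Encodable.encode m},
        ((· + c2 m') ⁻¹' S)ᶜ) with hA
  have hAmeas : ∀ m, MeasurableSet (A m) := by
    intro m
    apply MeasurableSet.inter
    · exact (hQmeas.inter ((measurable_add_const (c2 m)) hSm))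
    · exact MeasurableSet.biInter (Set.to_countable _)
        fun m' _ => ((measurable_add_const (c2 m')) hSm).compl
  have hAsubQ : ∀ m, A m ⊆ Q := fun m x hx => hx.1.1
  have hAdisj : Pairwise (Function.onFun Disjoint A) := by
    intro m m' hne
    rw [Function.onFun, Set.disjoint_left]
    intro x hxm hxm'
    rcases Nat.lt_trichotomy (Encodable.encode m) (Encodable.encode m') with h | h | h
    · exact (Set.mem_iInter₂.1 hxm'.2 m h) hxm.1.2
    · exact hne (Encodable.encode_injective h)
    · exact (Set.mem_iInter₂.1 hxm.2 m' h) hxm'.1.2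
  have hAunion : (⋃ m, A m) = Q := by
    apply Set.Subset.antisymm (Set.iUnion_subset hAsubQ)
    intro x hxQ
    obtain ⟨m, hmj, hmS⟩ := Nat.find_spec (hex x)
    refine Set.mem_iUnion.2 ⟨m, ⟨⟨hxQ, hmS⟩, Set.mem_iInter₂.2 ?_⟩⟩
    intro m' hlt hS'
    have hlt' : Encodable.encode m' < Nat.find (hex x) := hmj ▸ hlt
    exact Nat.find_min (hex x) hlt' ⟨m', rfl, hS'⟩
  -- the fundamental domain
  set B : (Fin n → ℤ) → Set (Fin n → ℝ) := fun m => (· - c2 m) ⁻¹' (A m) with hB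
  have hBmeas : ∀ m, MeasurableSet (B m) := fun m =>
    (measurable_sub_const (c2 m)) (hAmeas m)
  have hBsubS : ∀ m, B m ⊆ S := by
    intro m y hy
    have h1 : (y - c2 m) + c2 m ∈ S := hy.1.2
    rwa [sub_add_cancel] at h1
  have hBdisj : Pairwise (Function.onFun Disjoint B) := by
    intro m m' hne
    rw [Function.onFun, Set.disjoint_left]
    intro y hym hym'
    apply hne
    funext i
    have h1 := hAsubQ m hym i (Set.mem_univ i)
    have h2 := hAsubQ m' hym' i (Set.mem_univ i)
    simp only [Pi.sub_apply, Set.mem_Ico, hc2] at h1 h2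
    have h2pi := Real.two_pi_pos
    have hd1 : ((m' i - m i : ℤ) : ℝ) < 1 := by push_cast; nlinarith
    have hd2 : (-1 : ℝ) < ((m' i - m i : ℤ) : ℝ) := by push_cast; nlinarith
    have : (m' i - m i : ℤ) = 0 := by
      have hd1' : (m' i - m i : ℤ) < 1 := by exact_mod_cast hd1
      have hd2' : (-1 : ℤ) < (m' i - m i : ℤ) := by exact_mod_cast hd2
      omega
    omega
  refine ⟨⋃ m, B m, MeasurableSet.iUnion hBmeas, Set.iUnion_subset hBsubS, ?_⟩
  intro m
  have hDvol : volume (⋃ m, B m) ≠ ⊤ :=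
    (lt_of_le_of_lt (measure_mono (Set.iUnion_subset hBsubS)) hSvol.lt_top).ne
  have hBint : ∀ k, ∫ x in B k, eC m x = ∫ x in A k, eC m x := by
    intro k
    have hmp : MeasurePreserving (· - c2 k) (volume : Measure (Fin n → ℝ)) volume :=
      measurePreserving_sub_right volume (c2 k)
    have hemb : MeasurableEmbedding (· - c2 k) :=
      (MeasurableEquiv.subRight (c2 k)).measurableEmbedding
    have h1 := hmp.setIntegral_preimage_emb hemb (fun x => eC m (x + c2 k)) (A k)
    have h2 : ∀ y : Fin n → ℝ, eC m (y - c2 k + c2 k) = eC m y := fun y => by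
      rw [sub_add_cancel]
    simp only [h2] at h1
    rw [hB]
    rw [h1]
    congr 1
    funext x
    exact eC_periodic m k x
  rw [integral_iUnion hBmeas hBdisj (integrableOn_eC m hDvol)]
  simp_rw [hBint]
  rw [← integral_iUnion hAmeas hAdisj (by rw [hAunion]; exact integrableOn_eC m hQvol),
    hAunion]
  exact boxInt m


local notation "⟪" x ", " y "⟫" => @inner ℂ _ _ x y

lemma exists_of_orthonormal {ι E : Type*} [NormedAddCommGroup E] [InnerProductSpace ℂ E]
    [CompleteSpace E] {f : ι → E} (hf : Orthonormal ℂ f) {c : ι → ℂ}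
    (hc : Summable fun i => ‖c i‖ ^ 2) :
    ∃ F : E, ∀ k, ⟪f k, F⟫ = c k := by
  classical
  have hs : Summable fun i => c i • f i := by
    have h := (hf.orthogonalFamily).summable_iff_norm_sq_summable c
    simpa only [LinearIsometry.toSpanSingleton_apply] using h.mpr hc
  refine ⟨∑' i, c i • f i, fun k => ?_⟩
  have h1 : HasSum (fun l => ⟪f k, c l • f l⟫) ⟪f k, ∑' l, c l • f l⟫ :=
    (hs.hasSum).mapL (innerSL ℂ (f k))
  have h2 : (fun l => (⟪f k, c l • f l⟫ : ℂ)) = fun l => if l = k then c k else 0 := by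
    funext l
    rw [inner_smul_right, orthonormal_iff_ite.mp hf k l]
    rcases eq_or_ne l k with h | h
    · simp [h]
    · simp [h, Ne.symm h]
  rw [h2] at h1
  exact h1.unique (hasSum_ite_eq k (c k))

lemma eC_conj_mul {n : ℕ} (k l : Fin n → ℤ) (x : Fin n → ℝ) :
    (starRingEnd ℂ) (eC k x) * eC l x = eC (l - k) x := by
  rw [eC, eC, eC, ← Complex.exp_conj, ← Complex.exp_add]
  congr 1
  rw [map_mul, Complex.conj_I, Complex.conj_ofReal]
  have h1 : (∑ j, ((l - k) j : ℝ) * x j) = (∑ j, (l j : ℝ) * x j) - (∑ j, (k j : ℝ) * x j) := by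
    rw [← Finset.sum_sub_distrib]
    apply Finset.sum_congr rfl
    intro j _
    simp only [Pi.sub_apply]
    push_cast
    ring
  rw [h1]
  push_cast
  ring

lemma eC_zero {n : ℕ} (x : Fin n → ℝ) : eC (0 : Fin n → ℤ) x = 1 := by
  rw [eC]
  simp

lemma eC_conj {n : ℕ} (k : Fin n → ℤ) (x : Fin n → ℝ) :
    (starRingEnd ℂ) (eC k x) = eC (-k) x := by
  have h := eC_conj_mul k 0 x
  rwa [eC_zero, mul_one, zero_sub] at h

/-- if the `2πℤⁿ`-translates of a bounded measurable `S` cover `ℝⁿ`,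
then every `ℓ²` sequence `(c_k)` is the sequence of Fourier coefficients
`(2π)^{-n/2} ∫_S F(x) e^{-ik·x} dx` of some `F ∈ L²(S)`. -/
theorem covering_gives_interpolation (n : ℕ)
    (S : Set (Fin n → ℝ)) (hSm : MeasurableSet S) (hSb : Bornology.IsBounded S)
    (hcov : ∀ y : Fin n → ℝ, ∃ s ∈ S, ∃ m : Fin n → ℤ,
      y = s + (2 * π) • (fun i => (m i : ℝ))) :
    ∀ c : (Fin n → ℤ) → ℂ, Summable (fun k => ‖c k‖ ^ 2) →
      ∃ F : (Fin n → ℝ) → ℂ, MemLp F 2 (volume.restrict S) ∧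
        ∀ k : Fin n → ℤ,
          (((2 * π) ^ (-(n : ℝ) / 2) : ℝ) : ℂ) *
              (∫ x in S, F x * Complex.exp (-Complex.I * ∑ j, (k j : ℝ) * x j)) = c k := by
  classical
  intro c hc
  have h2pi := Real.two_pi_pos
  have hSvol : volume S ≠ ⊤ := hSb.measure_lt_top.ne
  obtain ⟨D, hDm, hDS, hDint⟩ := exists_fund n S hSm hSvol hcov
  haveI : IsFiniteMeasure (volume.restrict S) :=
    ⟨by rw [Measure.restrict_apply_univ]; exact hSvol.lt_top⟩
  set α : ℝ := (2 * π) ^ (-(n : ℝ) / 2) with hα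
  have hαsq : (α : ℂ) ^ 2 * (((2*π)^n : ℝ) : ℂ) = 1 := by
    have hr : α ^ 2 * (2*π)^n = 1 := by
      rw [hα, ← Real.rpow_natCast ((2 * π) ^ (-(n:ℝ)/2)) 2, ← Real.rpow_mul h2pi.le,
        ← Real.rpow_natCast (2*π) n, ← Real.rpow_add h2pi]
      norm_num
    calc (α : ℂ)^2 * (((2*π)^n : ℝ) : ℂ) = ((α^2 * (2*π)^n : ℝ) : ℂ) := by push_cast; ring
    _ = 1 := by rw [hr]; norm_num
  set g : (Fin n → ℤ) → (Fin n → ℝ) → ℂ :=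
    fun k => D.indicator (fun x => (α : ℂ) * eC k x) with hg
  have hgdef : ∀ k x, g k x = D.indicator (fun x => (α : ℂ) * eC k x) x := fun _ _ => rfl
  have hg_meas : ∀ k, AEStronglyMeasurable (g k) (volume.restrict S) := fun k =>
    ((continuous_const.mul (eC_continuous k)).aestronglyMeasurable).indicator hDm
  have hg_mem : ∀ k, MemLp (g k) 2 (volume.restrict S) := by
    intro k
    apply MemLp.of_bound (hg_meas k) |α|
    filter_upwards with x
    rw [hgdef]
    by_cases hx : x ∈ D
    · rw [Set.indicator_of_mem hx, norm_mul, Complex.norm_real, eC_norm, mul_one]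
      exact (Real.norm_eq_abs α).le
    · rw [Set.indicator_of_notMem hx]
      simp
  set f : (Fin n → ℤ) → Lp ℂ 2 (volume.restrict S) := fun k => (hg_mem k).toLp (g k) with hf
  have hinner : ∀ (k : Fin n → ℤ) (G : Lp ℂ 2 (volume.restrict S)),
      (inner ℂ (f k) G : ℂ) = ∫ x, (starRingEnd ℂ) (g k x) * G x ∂(volume.restrict S) := by
    intro k G
    rw [MeasureTheory.L2.inner_def]
    apply integral_congr_ae
    filter_upwards [(hg_mem k).coeFn_toLp] with x hx
    rw [RCLike.inner_apply, hx, mul_comm]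
  have hON : Orthonormal ℂ f := by
    rw [orthonormal_iff_ite]
    intro k l
    rw [hinner k (f l)]
    have hae : ∀ᵐ x ∂(volume.restrict S), (starRingEnd ℂ) (g k x) * (f l) x
        = D.indicator (fun x => (α:ℂ)^2 * eC (l - k) x) x := by
      filter_upwards [(hg_mem l).coeFn_toLp] with x hx
      rw [hx, hgdef, hgdef]
      by_cases hxD : x ∈ D
      · rw [Set.indicator_of_mem hxD, Set.indicator_of_mem hxD, Set.indicator_of_mem hxD,
          map_mul, Complex.conj_ofReal]
        have h2 := eC_conj_mul k l x
        calc (α:ℂ) * (starRingEnd ℂ) (eC k x) * ((α:ℂ) * eC l x)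
            = (α:ℂ)^2 * ((starRingEnd ℂ) (eC k x) * eC l x) := by ring
          _ = (α:ℂ)^2 * eC (l - k) x := by rw [h2]
      · rw [Set.indicator_of_notMem hxD, Set.indicator_of_notMem hxD,
          Set.indicator_of_notMem hxD]
        simp
    rw [integral_congr_ae hae, integral_indicator hDm,
      Measure.restrict_restrict hDm, Set.inter_eq_self_of_subset_left hDS,
      integral_const_mul, hDint (l - k)]
    rcases eq_or_ne k l with h | h
    · rw [if_pos h, if_pos (by rw [h, sub_self])]
      exact hαsq
    · rw [if_neg h, if_neg (sub_ne_zero.mpr (Ne.symm h)), mul_zero]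
  obtain ⟨F0, hF0⟩ := exists_of_orthonormal hON hc
  set F : (Fin n → ℝ) → ℂ := D.indicator (fun x => F0 x) with hF
  refine ⟨F, (Lp.memLp F0).indicator hDm, ?_⟩
  intro k
  have key : ∫ x, (starRingEnd ℂ) (g k x) * F0 x ∂(volume.restrict S) = c k := by
    rw [← hinner k F0]
    exact hF0 k
  have hexp : ∀ x : Fin n → ℝ,
      Complex.exp (-Complex.I * ∑ j, (k j : ℝ) * x j) = eC (-k) x := by
    intro x
    rw [eC]
    congr 1
    have h1 : (∑ j, ((-k) j : ℝ) * x j) = -(∑ j, (k j : ℝ) * x j) := by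
      rw [← Finset.sum_neg_distrib]
      apply Finset.sum_congr rfl
      intro j _
      simp only [Pi.neg_apply]
      push_cast
      ring
    rw [h1]
    push_cast
    ring
  have hpt : ∀ x, (α : ℂ) * (F x * Complex.exp (-Complex.I * ∑ j, (k j : ℝ) * x j))
      = (starRingEnd ℂ) (g k x) * F0 x := by
    intro x
    rw [hexp x, hF, hgdef]
    by_cases hxD : x ∈ D
    · rw [Set.indicator_of_mem hxD, Set.indicator_of_mem hxD, map_mul, Complex.conj_ofReal,
        eC_conj]
      ring
    · rw [Set.indicator_of_notMem hxD, Set.indicator_of_notMem hxD]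
      simp
  rw [← integral_const_mul]
  rw [show (fun x => (α : ℂ) * (F x * Complex.exp (-Complex.I * ∑ j, (k j : ℝ) * x j)))
      = fun x => (starRingEnd ℂ) (g k x) * F0 x from funext hpt]
  exact key
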